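/- arXiv:2408.05058 — 2 statements merged into one kernel-verified Lean document; each statement's English description precedes it below -/
import Mathlib

section
/- The function f^J defined by reweighting the symmetrized joint Q^J(τ^{1:K}, q^{1:K}, z^{1:K,0:J}) by the ratio (Σ_k w_k^J)/(Σ_k w_k) integrates to one; in fact, integrating out the latent variables z^{1:K,0:J} yields exactly the product variational density Π_{k=1}^K Q_φ(τ^k) Q_ψ(q^k|τ^k). -/
open MeasureTheory

namespace VBPIfJ

variable {T : Type*}

/-- The (J+1)-sample mixture estimate `Q_ψ^J(q|τ,z^{0:J})`. -/
noncomputable def Qmix (dq dz : ℕ) (Qc : T → (Fin dq → ℝ) → (Fin dz → ℝ) → ℝ)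
    (J : ℕ) (τ : T) (q : Fin dq → ℝ) (zs : Fin (J + 1) → Fin dz → ℝ) : ℝ :=
  (1 / (J + 1 : ℝ)) * ∑ j, Qc τ q (zs j)

/-- The exact marginal `Q_ψ(q|τ) = ∫ Q_ψ(q|τ,z) Q_ψ(z|τ) dz`. -/
noncomputable def Qmarg (dq dz : ℕ) (Qc : T → (Fin dq → ℝ) → (Fin dz → ℝ) → ℝ)
    (Qz : T → (Fin dz → ℝ) → ℝ) (τ : T) (q : Fin dq → ℝ) : ℝ :=
  ∫ z, Qc τ q z * Qz τ z

/-- The symmetrized joint density `Q^J(τ^{1:K}, q^{1:K}, z^{1:K,0:J})`. -/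
noncomputable def QJdens (dq dz : ℕ) (Qφ : T → ℝ)
    (Qc : T → (Fin dq → ℝ) → (Fin dz → ℝ) → ℝ) (Qz : T → (Fin dz → ℝ) → ℝ)
    (K J : ℕ) (τs : Fin K → T) (qs : Fin K → Fin dq → ℝ)
    (zs : Fin K → Fin (J + 1) → Fin dz → ℝ) : ℝ :=
  ∏ k, Qmix dq dz Qc J (τs k) (qs k) (zs k) * (∏ j, Qz (τs k) (zs k j)) * Qφ (τs k)

/-- Weight with the exact marginal. -/
noncomputable def wExact (dq dz : ℕ) (Ppost : T → (Fin dq → ℝ) → ℝ) (Qφ : T → ℝ)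
    (Qc : T → (Fin dq → ℝ) → (Fin dz → ℝ) → ℝ) (Qz : T → (Fin dz → ℝ) → ℝ)
    (τ : T) (q : Fin dq → ℝ) : ℝ :=
  Ppost τ q / (Qφ τ * Qmarg dq dz Qc Qz τ q)

/-- Weight with the mixture estimate. -/
noncomputable def wMix (dq dz : ℕ) (Ppost : T → (Fin dq → ℝ) → ℝ) (Qφ : T → ℝ)
    (Qc : T → (Fin dq → ℝ) → (Fin dz → ℝ) → ℝ)
    (J : ℕ) (τ : T) (q : Fin dq → ℝ) (zs : Fin (J + 1) → Fin dz → ℝ) : ℝ :=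
  Ppost τ q / (Qφ τ * Qmix dq dz Qc J τ q zs)

/-- The reweighted function `f^J = (Σ_k w_k^J / Σ_k w_k) · Q^J`. -/
noncomputable def fJ (dq dz : ℕ) (Ppost : T → (Fin dq → ℝ) → ℝ) (Qφ : T → ℝ)
    (Qc : T → (Fin dq → ℝ) → (Fin dz → ℝ) → ℝ) (Qz : T → (Fin dz → ℝ) → ℝ)
    (K J : ℕ) (τs : Fin K → T) (qs : Fin K → Fin dq → ℝ)
    (zs : Fin K → Fin (J + 1) → Fin dz → ℝ) : ℝ :=
  ((∑ k, wMix dq dz Ppost Qφ Qc J (τs k) (qs k) (zs k)) /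
      (∑ k, wExact dq dz Ppost Qφ Qc Qz (τs k) (qs k))) *
    QJdens dq dz Qφ Qc Qz K J τs qs zs

/-- Integrating the latent variables out of `f^J` yields the product variational
density, and `f^J` integrates to one overall. -/
theorem fJ_is_probability_density [Fintype T] (dq dz : ℕ)
    (Ppost : T → (Fin dq → ℝ) → ℝ) (Qφ : T → ℝ)
    (Qc : T → (Fin dq → ℝ) → (Fin dz → ℝ) → ℝ) (Qz : T → (Fin dz → ℝ) → ℝ)
    (K J : ℕ) (hK : 1 ≤ K)
    (hQφ_pos : ∀ τ, 0 < Qφ τ) (hQφ_prob : ∑ τ, Qφ τ = 1)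
    (hQz_nonneg : ∀ τ z, 0 ≤ Qz τ z) (hQz_prob : ∀ τ, ∫ z, Qz τ z = 1)
    (hQc_nonneg : ∀ τ q z, 0 ≤ Qc τ q z)
    (hQmarg_prob : ∀ τ, ∫ q, Qmarg dq dz Qc Qz τ q = 1)
    (hPpost_pos : ∀ τ q, 0 < Ppost τ q)
    (hQmarg_pos : ∀ τ q, 0 < Qmarg dq dz Qc Qz τ q)
    (hQmix_pos : ∀ τ q zs, 0 < Qmix dq dz Qc J τ q zs)
    (hmix_unbiased : ∀ (τ : T) (q : Fin dq → ℝ),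
      (∫ zs : Fin (J + 1) → Fin dz → ℝ,
          (∏ j, Qz τ (zs j)) * Qmix dq dz Qc J τ q zs)
        = Qmarg dq dz Qc Qz τ q)
    (hint_z : ∀ (τs : Fin K → T) (qs : Fin K → Fin dq → ℝ),
      Integrable (fun zs : Fin K → Fin (J + 1) → Fin dz → ℝ =>
        fJ dq dz Ppost Qφ Qc Qz K J τs qs zs))
    (hint_q : ∀ τs : Fin K → T,
      Integrable (fun qs : Fin K → Fin dq → ℝ =>
        ∏ k, Qφ (τs k) * Qmarg dq dz Qc Qz (τs k) (qs k))) :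
    (∀ (τs : Fin K → T) (qs : Fin K → Fin dq → ℝ),
      (∫ zs : Fin K → Fin (J + 1) → Fin dz → ℝ,
          fJ dq dz Ppost Qφ Qc Qz K J τs qs zs)
        = ∏ k, Qφ (τs k) * Qmarg dq dz Qc Qz (τs k) (qs k))
    ∧ (∑ τs : Fin K → T, ∫ qs : Fin K → Fin dq → ℝ,
        ∫ zs : Fin K → Fin (J + 1) → Fin dz → ℝ,
          fJ dq dz Ppost Qφ Qc Qz K J τs qs zs) = 1 := by
  haveI : Nonempty (Fin K) := ⟨⟨0, hK⟩⟩
  -- basic integrability facts extracted from the normalization hypotheses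
  have hQzInt : ∀ τ : T, Integrable (fun z : Fin dz → ℝ => Qz τ z) := by
    intro τ
    by_contra h
    have := hQz_prob τ
    rw [integral_undef h] at this
    norm_num at this
  have hMixInt : ∀ (τ : T) (q : Fin dq → ℝ),
      Integrable (fun zs : Fin (J + 1) → Fin dz → ℝ =>
        (∏ j, Qz τ (zs j)) * Qmix dq dz Qc J τ q zs) := by
    intro τ q
    by_contra h
    have := hmix_unbiased τ q
    rw [integral_undef h] at this
    exact (hQmarg_pos τ q).ne' this.symm
  have hQmargInt : ∀ τ : T, Integrable (fun q => Qmarg dq dz Qc Qz τ q) := by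
    intro τ
    by_contra h
    have := hQmarg_prob τ
    rw [integral_undef h] at this
    norm_num at this
  -- main claim: integrating out the z's
  have h1 : ∀ (τs : Fin K → T) (qs : Fin K → Fin dq → ℝ),
      (∫ zs : Fin K → Fin (J + 1) → Fin dz → ℝ,
          fJ dq dz Ppost Qφ Qc Qz K J τs qs zs)
        = ∏ k, Qφ (τs k) * Qmarg dq dz Qc Qz (τs k) (qs k) := by
    intro τs qs
    set S := ∑ k, wExact dq dz Ppost Qφ Qc Qz (τs k) (qs k) with hSdef
    have hwpos : ∀ k, 0 < wExact dq dz Ppost Qφ Qc Qz (τs k) (qs k) := fun k =>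
      div_pos (hPpost_pos _ _) (mul_pos (hQφ_pos _) (hQmarg_pos _ _))
    have hSpos : 0 < S :=
      Finset.sum_pos (fun k _ => hwpos k) Finset.univ_nonempty
    set G : Fin K → Fin K → (Fin (J + 1) → Fin dz → ℝ) → ℝ := fun k l z =>
      if l = k then Ppost (τs k) (qs k) * ∏ j, Qz (τs k) (z j)
      else Qmix dq dz Qc J (τs l) (qs l) z * (∏ j, Qz (τs l) (z j)) * Qφ (τs l)
      with hGdef
    have hGint : ∀ k l, Integrable (G k l) := by
      intro k l
      by_cases h : l = k
      · simp only [hGdef, h, if_pos rfl]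
        exact (Integrable.fintype_prod (fun _ : Fin (J + 1) => hQzInt (τs k))).const_mul _
      · simp only [hGdef, if_neg h]
        have h2 := (hMixInt (τs l) (qs l)).mul_const (Qφ (τs l))
        refine h2.congr ?_
        filter_upwards with z
        ring
    -- pointwise rewriting of fJ
    have hfJ_eq : ∀ zs : Fin K → Fin (J + 1) → Fin dz → ℝ,
        fJ dq dz Ppost Qφ Qc Qz K J τs qs zs = S⁻¹ * ∑ k, ∏ l, G k l (zs l) := by
      intro zs
      have hterm : ∀ k, wMix dq dz Ppost Qφ Qc J (τs k) (qs k) (zs k) *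
          QJdens dq dz Qφ Qc Qz K J τs qs zs = ∏ l, G k l (zs l) := by
        intro k
        unfold QJdens
        rw [← Finset.prod_compl_mul_prod {k}, ← Finset.prod_compl_mul_prod {k}
          (f := fun l => G k l (zs l))]
        have hco : ∀ l ∈ ({k} : Finset (Fin K))ᶜ, G k l (zs l) =
            Qmix dq dz Qc J (τs l) (qs l) (zs l) * (∏ j, Qz (τs l) (zs l j)) * Qφ (τs l) := by
          intro l hl
          simp only [Finset.mem_compl, Finset.mem_singleton] at hl
          simp [hGdef, hl]
        rw [Finset.prod_congr rfl hco]
        rw [Finset.prod_singleton, Finset.prod_singleton]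
        simp only [hGdef, if_pos rfl]
        unfold wMix
        rw [div_mul_eq_mul_div, div_eq_iff (mul_pos (hQφ_pos (τs k))
          (hQmix_pos (τs k) (qs k) (zs k))).ne']
        ring
      unfold fJ
      rw [div_eq_mul_inv, mul_comm (∑ k, wMix dq dz Ppost Qφ Qc J (τs k) (qs k) (zs k)) S⁻¹,
        mul_assoc, Finset.sum_mul]
      simp_rw [hterm]
    simp_rw [hfJ_eq]
    rw [integral_const_mul, volume_pi, integral_finset_sum _
      (fun k _ => Integrable.fintype_prod (fun l => hGint k l)), ← volume_pi]
    have hGval : ∀ k l, (∫ z, G k l z) =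
        if l = k then Ppost (τs k) (qs k)
        else Qφ (τs l) * Qmarg dq dz Qc Qz (τs l) (qs l) := by
      intro k l
      by_cases h : l = k
      · simp only [hGdef, h, if_pos rfl]
        rw [integral_const_mul, volume_pi, integral_fintype_prod_eq_prod (ι := Fin (J + 1))
          (fun _ z => Qz (τs k) z)]
        simp [hQz_prob (τs k)]
      · simp only [hGdef, if_neg h]
        have : (∫ z, Qmix dq dz Qc J (τs l) (qs l) z * (∏ j, Qz (τs l) (z j)) * Qφ (τs l))
            = (∫ z, (∏ j, Qz (τs l) (z j)) * Qmix dq dz Qc J (τs l) (qs l) z) * Qφ (τs l) := by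
          rw [← integral_mul_const]
          congr 1
          funext z
          ring
        rw [this, hmix_unbiased, mul_comm]
    have hprod : ∀ k, (∫ zs : Fin K → Fin (J + 1) → Fin dz → ℝ, ∏ l, G k l (zs l))
        = wExact dq dz Ppost Qφ Qc Qz (τs k) (qs k) *
          ∏ l, Qφ (τs l) * Qmarg dq dz Qc Qz (τs l) (qs l) := by
      intro k
      rw [volume_pi, integral_fintype_prod_eq_prod (ι := Fin K) (fun l => G k l)]
      simp_rw [hGval]
      rw [← Finset.prod_compl_mul_prod {k}, ← Finset.prod_compl_mul_prod {k}
        (f := fun l => Qφ (τs l) * Qmarg dq dz Qc Qz (τs l) (qs l))]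
      have hco : ∀ l ∈ ({k} : Finset (Fin K))ᶜ,
          (if l = k then Ppost (τs k) (qs k)
            else Qφ (τs l) * Qmarg dq dz Qc Qz (τs l) (qs l))
          = Qφ (τs l) * Qmarg dq dz Qc Qz (τs l) (qs l) := by
        intro l hl
        simp only [Finset.mem_compl, Finset.mem_singleton] at hl
        simp [hl]
      rw [Finset.prod_congr rfl hco, Finset.prod_singleton, Finset.prod_singleton]
      simp only [if_pos rfl]
      unfold wExact
      rw [div_mul_eq_mul_div, eq_div_iff (mul_pos (hQφ_pos (τs k))
        (hQmarg_pos (τs k) (qs k))).ne']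
      simp only [if_true]
      ring
    simp_rw [hprod]
    rw [← Finset.sum_mul, ← hSdef, inv_mul_cancel_left₀ hSpos.ne']
  refine ⟨h1, ?_⟩
  have h2 : ∀ τs : Fin K → T,
      (∫ qs : Fin K → Fin dq → ℝ, ∏ k, Qφ (τs k) * Qmarg dq dz Qc Qz (τs k) (qs k))
        = ∏ k, Qφ (τs k) := by
    intro τs
    rw [volume_pi, integral_fintype_prod_eq_prod (ι := Fin K)
      (fun k q => Qφ (τs k) * Qmarg dq dz Qc Qz (τs k) q)]
    congr 1
    funext k
    rw [integral_const_mul, hQmarg_prob, mul_one]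
  calc (∑ τs : Fin K → T, ∫ qs : Fin K → Fin dq → ℝ,
        ∫ zs : Fin K → Fin (J + 1) → Fin dz → ℝ,
          fJ dq dz Ppost Qφ Qc Qz K J τs qs zs)
      = ∑ τs : Fin K → T, ∏ k, Qφ (τs k) := by
        refine Finset.sum_congr rfl fun τs _ => ?_
        rw [← h2 τs]
        exact integral_congr_ae (Filter.Eventually.of_forall fun qs => h1 τs qs)
    _ = ∏ _k : Fin K, ∑ τ, Qφ τ := by
        rw [← Finset.sum_prod_piFinset Finset.univ (fun (_ : Fin K) τ => Qφ τ),
          Fintype.piFinset_univ]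
    _ = 1 := by simp [hQφ_prob]


end VBPIfJ
end

section
/- For any reverse model R, the single-sample importance weighted lower bound satisfies IWLB_J ≤ IWLB_{J+1} ≤ ELBO for all J ≥ 0, where IWLB_J = E_{Q(x,z^0), z^{1:J} iid R(·|x)} log( P(x,D) / ((1/(J+1)) Σ_{j=0}^J Q(x|z^j)Q(z^j)/R(z^j|x)) ). -/
open MeasureTheory

/-- The single-sample importance weighted lower bound `IWLB_J` with reverse model
`R(·|x)`: `(x,z⁰) ~ Q(x,z⁰)` and `z^{1:J}` i.i.d. from `R(·|x)`. -/
noncomputable def IWLB (d m : ℕ) (Qc : (Fin d → ℝ) → (Fin m → ℝ) → ℝ)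
    (Qz : (Fin m → ℝ) → ℝ) (R : (Fin d → ℝ) → (Fin m → ℝ) → ℝ)
    (P : (Fin d → ℝ) → ℝ) (J : ℕ) : ℝ :=
  ∫ p : ((Fin d → ℝ) × (Fin m → ℝ)) × (Fin J → (Fin m → ℝ)),
    (Qc p.1.1 p.1.2 * Qz p.1.2 * ∏ j, R p.1.1 (p.2 j)) *
      Real.log (P p.1.1 / ((1 / (J + 1 : ℝ)) *
        (Qc p.1.1 p.1.2 * Qz p.1.2 / R p.1.1 p.1.2 +
          ∑ j, Qc p.1.1 (p.2 j) * Qz (p.2 j) / R p.1.1 (p.2 j))))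

open scoped ENNReal NNReal

section Helpers

variable {β : Type*} [MeasureSpace β] [SigmaFinite (volume : Measure β)]

lemma qmp_eval {k : ℕ} (j : Fin (k+1)) :
    Measure.QuasiMeasurePreserving (fun z : Fin (k+1) → β => z j) volume volume := by
  refine ⟨measurable_pi_apply j, Measure.AbsolutelyContinuous.mk (fun s hs h0 => ?_)⟩
  rw [Measure.map_apply (measurable_pi_apply j) hs]
  have hmp := measurePreserving_piFinSuccAbove (fun _ : Fin (k+1) => (volume : Measure β)) j
  have hpre : (fun z : Fin (k+1) → β => z j) ⁻¹' s
      = (MeasurableEquiv.piFinSuccAbove (fun _ : Fin (k+1) => β) j) ⁻¹' (s ×ˢ Set.univ) := by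
    ext z
    simp [MeasurableEquiv.piFinSuccAbove]
    rfl
  rw [volume_pi, hpre, hmp.measure_preimage_equiv]
  simp [h0]

lemma aem_eval {k : ℕ} {f : β → ℝ} (hf : AEMeasurable f volume) (j : Fin (k+1)) :
    AEMeasurable (fun z : Fin (k+1) → β => f (z j)) volume :=
  hf.comp_quasiMeasurePreserving (qmp_eval j)

/-- change of variables along `piFinSuccAbove` for integrals over pi-volume -/
lemma integral_pi_succAbove {n : ℕ} (j : Fin (n+1)) (F : (Fin (n+1) → β) → ℝ) :
    ∫ z : Fin (n+1) → β, F z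
      = ∫ p : β × (Fin n → β), F (j.insertNth (α := fun _ => β) p.1 p.2) := by
  have hmp := (measurePreserving_piFinSuccAbove
    (fun _ : Fin (n+1) => (volume : Measure β)) j).symm
  rw [volume_pi, ← hmp.integral_comp']
  rfl

lemma integrable_pi_succAbove {n : ℕ} (j : Fin (n+1)) (F : (Fin (n+1) → β) → ℝ) :
    Integrable F (volume : Measure (Fin (n+1) → β)) ↔
      Integrable (fun p : β × (Fin n → β) => F (j.insertNth (α := fun _ => β) p.1 p.2)) volume := by
  have hmp := (measurePreserving_piFinSuccAbove
    (fun _ : Fin (n+1) => (volume : Measure β)) j).symm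
  rw [volume_pi]
  exact (hmp.integrable_comp_emb (MeasurableEquiv.measurableEmbedding _)).symm

end Helpers

noncomputable def Glog (c : ℝ) : ℝ → ℝ := fun s => s * Real.log c + Real.negMulLog s

lemma Glog_eq {c : ℝ} (hc : 0 < c) {s : ℝ} (hs : 0 ≤ s) :
    s * Real.log (c / s) = Glog c s := by
  rcases eq_or_lt_of_le hs with h | h
  · rw [← h]; simp [Glog]
  · simp only [Glog, Real.negMulLog]
    rw [Real.log_div (ne_of_gt hc) (ne_of_gt h)]
    ring

lemma Glog_concave (c : ℝ) : ConcaveOn ℝ (Set.Ici 0) (Glog c) := by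
  have h1 : ConcaveOn ℝ (Set.Ici (0:ℝ)) (fun s : ℝ => s * Real.log c) :=
    ⟨convex_Ici 0, fun x _ y _ a b _ _ _ => le_of_eq (by simp only [smul_eq_mul]; ring)⟩
  exact h1.add Real.concaveOn_negMulLog

lemma Glog_cont (c : ℝ) : ContinuousOn (Glog c) (Set.Ici 0) :=
  ((continuous_id.mul continuous_const).add Real.continuous_negMulLog).continuousOn

section PerX
variable {β : Type*} [MeasureSpace β] [SigmaFinite (volume : Measure β)]

lemma perx_jensen (Rx u w : β → ℝ) (c : ℝ) (hc : 0 < c)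
    (hR0 : ∀ b, 0 ≤ Rx b) (hu0 : ∀ b, 0 ≤ u b) (hdom : ∀ b, 0 < u b → 0 < Rx b)
    (hw : ∀ b, w b = u b / Rx b)
    (hRint : Integrable Rx volume) (hRprob : ∫ b, Rx b = 1)
    (hwm : AEMeasurable w volume)
    (n : ℕ)
    (hsl : Integrable (fun z : Fin (n+1) → β =>
      (∏ j, Rx (z j)) * ((1 / ((n:ℝ) + 1) * ∑ j, w (z j)) *
        Real.log (c / (1 / ((n:ℝ) + 1) * ∑ j, w (z j))))) volume) :
    (∫ z : Fin (n+1) → β,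
      (∏ j, Rx (z j)) * ((1 / ((n:ℝ) + 1) * ∑ j, w (z j)) *
        Real.log (c / (1 / ((n:ℝ) + 1) * ∑ j, w (z j)))))
      ≤ (∫ b, u b) * Real.log (c / ∫ b, u b) := by
  have hRm : AEMeasurable Rx volume := hRint.aemeasurable
  have hw0 : ∀ b, 0 ≤ w b := fun b => (hw b) ▸ div_nonneg (hu0 b) (hR0 b)
  have huw : ∀ b, w b * Rx b = u b := by
    intro b
    rcases eq_or_lt_of_le (hR0 b) with h | h
    · have hub : u b = 0 := by
        by_contra hne
        have := hdom b (lt_of_le_of_ne (hu0 b) (Ne.symm hne))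
        rw [← h] at this
        exact lt_irrefl 0 this
      rw [← h, hub, mul_zero]
    · rw [hw]; field_simp
  set S : (Fin (n+1) → β) → ℝ := fun z => 1 / ((n:ℝ) + 1) * ∑ j, w (z j) with hSdef
  set ρ : (Fin (n+1) → β) → ℝ := fun z => ∏ j, Rx (z j) with hρdef
  have hS0 : ∀ z, 0 ≤ S z := fun z =>
    mul_nonneg (by positivity) (Finset.sum_nonneg fun j _ => hw0 _)
  have hρ0 : ∀ z, 0 ≤ ρ z := fun z => Finset.prod_nonneg fun j _ => hR0 _
  have hρm : AEMeasurable ρ volume :=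
    Finset.aemeasurable_fun_prod _ fun j _ => aem_eval hRm j
  have hρint : Integrable ρ volume := Integrable.fintype_prod (fun _ : Fin (n+1) => hRint)
  have hSm : AEMeasurable S volume :=
    (Finset.aemeasurable_fun_sum _ fun j _ => aem_eval hwm j).const_mul _
  have hρ1 : ∫ z, ρ z = 1 := by
    show (∫ z : Fin (n+1) → β, ∏ j, Rx (z j)) = 1
    rw [integral_fintype_prod_volume_eq_pow (ι := Fin (n+1)) Rx, hRprob, one_pow]
  set π : Measure (Fin (n+1) → β) :=
    volume.withDensity (fun z => ((ρ z).toNNReal : ℝ≥0∞)) with hπdef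
  have hfρm : AEMeasurable (fun z => (ρ z).toNNReal) volume :=
    measurable_real_toNNReal.comp_aemeasurable hρm
  have hac : π ≪ volume := withDensity_absolutelyContinuous _ _
  have hmid : ∀ g : (Fin (n+1) → β) → ℝ, ∀ z, (ρ z).toNNReal • g z = ρ z * g z := fun g z => by
    rw [NNReal.smul_def, Real.coe_toNNReal _ (hρ0 z), smul_eq_mul]
  have hval : ∀ g : (Fin (n+1) → β) → ℝ, ∫ z, g z ∂π = ∫ z, ρ z * g z := by
    intro g
    rw [hπdef, integral_withDensity_eq_integral_smul₀ hfρm]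
    exact integral_congr_ae (Filter.Eventually.of_forall fun z => hmid g z)
  have hii : ∀ g : (Fin (n+1) → β) → ℝ,
      Integrable g π ↔ Integrable (fun z => ρ z * g z) volume := by
    intro g
    rw [hπdef, integrable_withDensity_iff_integrable_smul₀ hfρm]
    constructor <;> intro h
    · exact h.congr (Filter.Eventually.of_forall fun z => hmid g z)
    · exact h.congr (Filter.Eventually.of_forall fun z => (hmid g z).symm)
  haveI hπprob : IsProbabilityMeasure π := by
    constructor
    rw [hπdef, withDensity_apply _ MeasurableSet.univ, setLIntegral_univ]
    have h2 := ofReal_integral_eq_lintegral_ofReal hρint (Filter.Eventually.of_forall hρ0)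
    rw [hρ1] at h2
    rw [show (fun z => ((ρ z).toNNReal : ℝ≥0∞)) = fun z => ENNReal.ofReal (ρ z) from rfl, ← h2,
      ENNReal.ofReal_one]
  have hGeq : ∀ s : ℝ, 0 ≤ s → s * Real.log (c / s) = Glog c s := fun s hs => Glog_eq hc hs
  have e1 : ∀ z : Fin (n+1) → β,
      (∏ j, Rx (z j)) * ((1 / ((n:ℝ) + 1) * ∑ j, w (z j)) *
        Real.log (c / (1 / ((n:ℝ) + 1) * ∑ j, w (z j)))) = ρ z * Glog c (S z) := by
    intro z
    show ρ z * (S z * Real.log (c / S z)) = ρ z * Glog c (S z)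
    rw [hGeq _ (hS0 z)]
  have hsl' : Integrable (fun z => ρ z * Glog c (S z)) volume :=
    hsl.congr (Filter.Eventually.of_forall e1)
  have hGSπ : Integrable (fun z => Glog c (S z)) π := (hii _).mpr hsl'
  have hSπm : AEStronglyMeasurable S π := (hSm.mono_ac hac).aestronglyMeasurable
  have hSπ : Integrable S π := by
    refine Integrable.mono' ((integrable_const (Real.exp 1 * c)).add hGSπ.abs) hSπm ?_
    refine Filter.Eventually.of_forall fun z => ?_
    simp only [Pi.add_apply]
    rw [Real.norm_eq_abs, abs_of_nonneg (hS0 z)]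
    by_cases hle : S z ≤ Real.exp 1 * c
    · have := abs_nonneg (Glog c (S z)); linarith
    · push_neg at hle
      have hec : 0 < Real.exp 1 * c := by positivity
      have hSpos : 0 < S z := lt_trans hec hle
      have hlog : 1 ≤ Real.log (S z / c) := by
        rw [Real.le_log_iff_exp_le (by positivity)]
        exact (le_div_iff₀ hc).mpr hle.le
      have hGz : Glog c (S z) = S z * Real.log (c / S z) := (hGeq _ (hS0 z)).symm
      have hneg : Real.log (c / S z) = - Real.log (S z / c) := by
        rw [← Real.log_inv, inv_div]
      have h1 : |Glog c (S z)| = S z * Real.log (S z / c) := by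
        rw [hGz, hneg, mul_neg, abs_neg, abs_of_nonneg (mul_nonneg (hS0 z) (by linarith))]
      have h2 : S z ≤ S z * Real.log (S z / c) := le_mul_of_one_le_right (hS0 z) hlog
      linarith
  have hwjπ : ∀ j : Fin (n+1), Integrable (fun z => w (z j)) π := by
    intro j
    refine Integrable.mono' (hSπ.const_mul ((n:ℝ)+1))
      (((aem_eval hwm j).mono_ac hac).aestronglyMeasurable)
      (Filter.Eventually.of_forall fun z => ?_)
    rw [Real.norm_eq_abs, abs_of_nonneg (hw0 _)]
    have hone : ((n:ℝ)+1) * S z = ∑ j, w (z j) := by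
      show ((n:ℝ)+1) * (1 / ((n:ℝ)+1) * ∑ j, w (z j)) = _
      have : ((n:ℝ)+1) ≠ 0 := by positivity
      field_simp
    rw [hone]
    exact Finset.single_le_sum (f := fun k => w (z k)) (fun k _ => hw0 _) (Finset.mem_univ j)
  have hwjval : ∀ j : Fin (n+1), ∫ z, w (z j) ∂π = ∫ b, u b := by
    intro j
    rw [hval]
    rw [integral_pi_succAbove j (fun z => ρ z * w (z j))]
    have hpt : ∀ p : β × (Fin n → β),
        ρ (j.insertNth (α := fun _ => β) p.1 p.2)
          * w ((j.insertNth (α := fun _ => β) p.1 p.2) j)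
          = u p.1 * ∏ i, Rx (p.2 i) := by
      intro p
      rw [Fin.insertNth_apply_same]
      have hρe : ρ (j.insertNth (α := fun _ => β) p.1 p.2) = Rx p.1 * ∏ i, Rx (p.2 i) := by
        show ∏ k, Rx (j.insertNth (α := fun _ => β) p.1 p.2 k) = _
        have h := Fin.prod_univ_succAbove
          (fun k : Fin (n+1) => Rx (j.insertNth (α := fun _ => β) p.1 p.2 k)) j
        rw [h, Fin.insertNth_apply_same]
        exact congrArg _ (Finset.prod_congr rfl fun k _ => by rw [Fin.insertNth_apply_succAbove])
      rw [hρe, ← huw p.1]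
      ring
    rw [integral_congr_ae (Filter.Eventually.of_forall hpt)]
    rw [show (volume : Measure (β × (Fin n → β))) = (volume : Measure β).prod volume from rfl]
    rw [integral_prod_mul u (fun b : Fin n → β => ∏ i, Rx (b i))]
    rw [show (volume : Measure (Fin n → β)) = volume from rfl]
    rw [integral_fintype_prod_volume_eq_pow (ι := Fin n) Rx, hRprob, one_pow, mul_one]
  have hSval : ∫ z, S z ∂π = ∫ b, u b := by
    have hs1 : ∫ z, S z ∂π = 1 / ((n:ℝ)+1) * ∑ j, ∫ z, w (z j) ∂π := by
      rw [show S = fun z => 1 / ((n:ℝ) + 1) * ∑ j, w (z j) from rfl]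
      rw [integral_const_mul]
      congr 1
      exact integral_finset_sum Finset.univ (fun j _ => hwjπ j)
    rw [hs1]
    rw [Finset.sum_congr rfl (fun j _ => hwjval j), Finset.sum_const, Finset.card_univ,
      Fintype.card_fin, nsmul_eq_mul]
    have : ((n:ℝ)+1) ≠ 0 := by positivity
    push_cast
    field_simp
  have hjen := (Glog_concave c).le_map_integral (Glog_cont c) isClosed_Ici
    (Filter.Eventually.of_forall fun z => hS0 z) hSπ hGSπ
  calc (∫ z : Fin (n+1) → β,
      (∏ j, Rx (z j)) * ((1 / ((n:ℝ) + 1) * ∑ j, w (z j)) *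
        Real.log (c / (1 / ((n:ℝ) + 1) * ∑ j, w (z j)))))
      = ∫ z, ρ z * Glog c (S z) := integral_congr_ae (Filter.Eventually.of_forall e1)
    _ = ∫ z, Glog c (S z) ∂π := (hval _).symm
    _ ≤ Glog c (∫ z, S z ∂π) := hjen
    _ = Glog c (∫ b, u b) := by rw [hSval]
    _ = (∫ b, u b) * Real.log (c / ∫ b, u b) := (hGeq _ (integral_nonneg hu0)).symm

end PerX

section PerXMono
variable {β : Type*} [MeasureSpace β] [SigmaFinite (volume : Measure β)]

lemma perx_mono (Rx w : β → ℝ) (c : ℝ) (hc : 0 < c)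
    (hR0 : ∀ b, 0 ≤ Rx b) (hw0 : ∀ b, 0 ≤ w b)
    (hRint : Integrable Rx volume) (hRprob : ∫ b, Rx b = 1)
    (n : ℕ)
    (h1 : Integrable (fun z : Fin (n+1) → β =>
      (∏ j, Rx (z j)) * ((1 / ((n:ℝ) + 1) * ∑ j, w (z j)) *
        Real.log (c / (1 / ((n:ℝ) + 1) * ∑ j, w (z j))))) volume)
    (h2 : Integrable (fun z : Fin (n+1+1) → β =>
      (∏ j, Rx (z j)) * ((1 / (((n+1:ℕ):ℝ) + 1) * ∑ j, w (z j)) *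
        Real.log (c / (1 / (((n+1:ℕ):ℝ) + 1) * ∑ j, w (z j))))) volume) :
    (∫ z : Fin (n+1) → β, (∏ j, Rx (z j)) * ((1 / ((n:ℝ) + 1) * ∑ j, w (z j)) *
        Real.log (c / (1 / ((n:ℝ) + 1) * ∑ j, w (z j)))))
    ≤ ∫ z : Fin (n+1+1) → β, (∏ j, Rx (z j)) * ((1 / (((n+1:ℕ):ℝ) + 1) * ∑ j, w (z j)) *
        Real.log (c / (1 / (((n+1:ℕ):ℝ) + 1) * ∑ j, w (z j)))) := by
  have hGeq : ∀ s : ℝ, 0 ≤ s → s * Real.log (c / s) = Glog c s := fun s hs => Glog_eq hc hs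
  set Ψ : (Fin (n+1) → β) → ℝ := fun z =>
    (∏ j, Rx (z j)) * ((1 / ((n:ℝ) + 1) * ∑ j, w (z j)) *
      Real.log (c / (1 / ((n:ℝ) + 1) * ∑ j, w (z j)))) with hΨdef
  have key : ∀ i : Fin (n+1+1),
      Integrable (fun z : Fin (n+1+1) → β => Rx (z i) * Ψ (fun j => z (i.succAbove j))) volume ∧
      ∫ z : Fin (n+1+1) → β, Rx (z i) * Ψ (fun j => z (i.succAbove j)) = ∫ z, Ψ z := by
    intro i
    have hins : ∀ p : β × (Fin (n+1) → β),
        (fun j => (i.insertNth (α := fun _ => β) p.1 p.2) (i.succAbove j)) = p.2 :=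
      fun p => funext fun j => by rw [Fin.insertNth_apply_succAbove]
    have hpe : ∀ p : β × (Fin (n+1) → β),
        Rx ((i.insertNth (α := fun _ => β) p.1 p.2) i) *
          Ψ (fun j => (i.insertNth (α := fun _ => β) p.1 p.2) (i.succAbove j))
        = Rx p.1 * Ψ p.2 := fun p => by rw [Fin.insertNth_apply_same, hins p]
    constructor
    · refine (integrable_pi_succAbove i _).mpr ?_
      exact (hRint.mul_prod h1).congr (Filter.Eventually.of_forall fun p => (hpe p).symm)
    · rw [integral_pi_succAbove i (fun z => Rx (z i) * Ψ (fun j => z (i.succAbove j)))]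
      rw [integral_congr_ae (Filter.Eventually.of_forall hpe)]
      rw [show (volume : Measure (β × (Fin (n+1) → β))) = (volume : Measure β).prod volume
        from rfl]
      rw [integral_prod_mul Rx Ψ, hRprob, one_mul]
  have hpt : ∀ z : Fin (n+1+1) → β,
      1 / ((n:ℝ)+2) * ∑ i, Rx (z i) * Ψ (fun j => z (i.succAbove j))
        ≤ (∏ j, Rx (z j)) * ((1 / (((n+1:ℕ):ℝ) + 1) * ∑ j, w (z j)) *
            Real.log (c / (1 / (((n+1:ℕ):ℝ) + 1) * ∑ j, w (z j)))) := by
    intro z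
    set T : ℝ := ∑ j, w (z j) with hT
    set ρ2 : ℝ := ∏ j, Rx (z j) with hρ2
    have hρ20 : 0 ≤ ρ2 := Finset.prod_nonneg fun j _ => hR0 _
    have hSi0 : ∀ i : Fin (n+1+1),
        0 ≤ 1 / ((n:ℝ)+1) * ∑ j : Fin (n+1), w (z (i.succAbove j)) :=
      fun i => mul_nonneg (by positivity) (Finset.sum_nonneg fun j _ => hw0 _)
    have hterm : ∀ i : Fin (n+1+1),
        Rx (z i) * Ψ (fun j => z (i.succAbove j))
          = ρ2 * Glog c (1 / ((n:ℝ)+1) * ∑ j : Fin (n+1), w (z (i.succAbove j))) := by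
      intro i
      have hprod : Rx (z i) * ∏ j : Fin (n+1), Rx (z (i.succAbove j)) = ρ2 := by
        rw [hρ2]
        exact (Fin.prod_univ_succAbove (fun j => Rx (z j)) i).symm
      show Rx (z i) * ((∏ j : Fin (n+1), Rx (z (i.succAbove j))) *
        ((1 / ((n:ℝ) + 1) * ∑ j : Fin (n+1), w (z (i.succAbove j))) *
          Real.log (c / (1 / ((n:ℝ) + 1) * ∑ j : Fin (n+1), w (z (i.succAbove j)))))) = _
      rw [hGeq _ (hSi0 i), ← mul_assoc, hprod]
    have hsum : ∀ i : Fin (n+1+1),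
        ∑ j : Fin (n+1), w (z (i.succAbove j)) = T - w (z i) := by
      intro i
      have h := Fin.sum_univ_succAbove (fun j => w (z j)) i
      rw [hT]
      linarith [h]
    have hjen := (Glog_concave c).le_map_sum (t := (Finset.univ : Finset (Fin (n+1+1))))
      (w := fun _ => 1 / ((n:ℝ)+2))
      (p := fun i => 1 / ((n:ℝ)+1) * ∑ j : Fin (n+1), w (z (i.succAbove j)))
      (fun i _ => by positivity)
      (by
        rw [Finset.sum_const, Finset.card_univ, Fintype.card_fin, nsmul_eq_mul]
        push_cast
        rw [show (n:ℝ)+1+1 = (n:ℝ)+2 from by ring]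
        field_simp)
      (fun i _ => hSi0 i)
    have harg : ∑ i : Fin (n+1+1),
        (1 / ((n:ℝ)+2)) • (1 / ((n:ℝ)+1) * ∑ j : Fin (n+1), w (z (i.succAbove j)))
        = 1 / (((n+1:ℕ):ℝ) + 1) * T := by
      simp only [smul_eq_mul]
      rw [Finset.sum_congr rfl (fun i _ => by rw [hsum i])]
      have hs : ∑ i : Fin (n+1+1), (T - w (z i)) = ((n:ℝ)+2) * T - T := by
        rw [Finset.sum_sub_distrib, Finset.sum_const, Finset.card_univ, Fintype.card_fin,
          nsmul_eq_mul, ← hT]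
        push_cast
        ring
      calc ∑ i : Fin (n+1+1), 1/((n:ℝ)+2) * (1/((n:ℝ)+1) * (T - w (z i)))
          = 1/((n:ℝ)+2) * (1/((n:ℝ)+1) * ∑ i : Fin (n+1+1), (T - w (z i))) := by
            rw [← Finset.mul_sum, ← Finset.mul_sum]
        _ = 1 / (((n+1:ℕ):ℝ) + 1) * T := by
            rw [hs]
            have hn1 : ((n:ℝ)+1) ≠ 0 := by positivity
            have hn2 : ((n:ℝ)+2) ≠ 0 := by positivity
            push_cast
            rw [show ((n:ℝ)+2)*T - T = ((n:ℝ)+1)*T from by ring,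
              show (n:ℝ)+1+1 = (n:ℝ)+2 from by ring]
            field_simp
    have hL : 1 / ((n:ℝ)+2) * ∑ i, Rx (z i) * Ψ (fun j => z (i.succAbove j))
        = ρ2 * ∑ i : Fin (n+1+1), (1/((n:ℝ)+2)) •
            Glog c (1 / ((n:ℝ)+1) * ∑ j : Fin (n+1), w (z (i.succAbove j))) := by
      rw [Finset.sum_congr rfl fun i _ => hterm i]
      simp only [smul_eq_mul]
      rw [Finset.mul_sum, Finset.mul_sum]
      exact Finset.sum_congr rfl fun i _ => by ring
    have hRr : (∏ j, Rx (z j)) * ((1 / (((n+1:ℕ):ℝ) + 1) * ∑ j, w (z j)) *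
            Real.log (c / (1 / (((n+1:ℕ):ℝ) + 1) * ∑ j, w (z j))))
        = ρ2 * Glog c (1 / (((n+1:ℕ):ℝ) + 1) * T) := by
      rw [hGeq _ (mul_nonneg (by positivity) (Finset.sum_nonneg fun j _ => hw0 _))]
    rw [hL, hRr, ← harg]
    exact mul_le_mul_of_nonneg_left hjen hρ20
  have hsum_int : Integrable (fun z : Fin (n+1+1) → β =>
      1 / ((n:ℝ)+2) * ∑ i, Rx (z i) * Ψ (fun j => z (i.succAbove j))) volume :=
    (integrable_finset_sum Finset.univ (fun i _ => (key i).1)).const_mul _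
  have hval : ∫ z : Fin (n+1+1) → β,
      1 / ((n:ℝ)+2) * ∑ i, Rx (z i) * Ψ (fun j => z (i.succAbove j)) = ∫ z, Ψ z := by
    rw [integral_const_mul, integral_finset_sum Finset.univ (fun i _ => (key i).1)]
    rw [Finset.sum_congr rfl (fun i _ => (key i).2), Finset.sum_const, Finset.card_univ,
      Fintype.card_fin, nsmul_eq_mul]
    push_cast
    have hne : ((n:ℝ) + 2) ≠ 0 := by positivity
    field_simp
    ring
  calc (∫ z, Ψ z)
      = ∫ z : Fin (n+1+1) → β,
          1 / ((n:ℝ)+2) * ∑ i, Rx (z i) * Ψ (fun j => z (i.succAbove j)) := hval.symm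
    _ ≤ _ := integral_mono hsum_int h2 hpt

end PerXMono

lemma ext_w_aem {β : Type*} [MeasureSpace β]
    (Rx u : β → ℝ) (c : ℝ) (hc : 0 < c)
    (hR0 : ∀ b, 0 ≤ Rx b) (hu0 : ∀ b, 0 ≤ u b) (hdom : ∀ b, 0 < u b → 0 < Rx b)
    (hRm : AEMeasurable Rx volume)
    (H : ∀ᵐ a, 0 < u a → AEMeasurable
        (fun b => Rx b * Real.log (c / (2⁻¹ * (u a / Rx a + u b / Rx b)))) volume) :
    AEMeasurable (fun b => u b / Rx b) volume := by
  set w : β → ℝ := fun b => u b / Rx b with hw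
  have hw0 : ∀ b, 0 ≤ w b := fun b => div_nonneg (hu0 b) (hR0 b)
  have hwpos : ∀ b, 0 < u b → 0 < w b := fun b hb => div_pos hb (hdom b hb)
  have hwz : ∀ b, ¬ (0 < u b) → w b = 0 := by
    intro b hb
    have : u b = 0 := le_antisymm (not_lt.mp hb) (hu0 b)
    simp [hw, this]
  have hwu : ∀ b, 0 < w b → 0 < u b := by
    intro b hb
    by_contra h
    rw [hwz b h] at hb; exact lt_irrefl 0 hb
  have key : ∀ a, 0 < u a →
      AEMeasurable (fun b => Rx b * Real.log (c / (2⁻¹ * (w a + w b)))) volume →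
      AEMeasurable (fun b => Rx b * Real.log (w a + w b)) volume := by
    intro a ha hm
    have hka : 0 < w a := hwpos a ha
    have heq : (fun b => Rx b * Real.log (w a + w b))
        = fun b => (Real.log c - Real.log 2⁻¹) * Rx b
            - Rx b * Real.log (c / (2⁻¹ * (w a + w b))) := by
      funext b
      have hs : 0 < w a + w b := by have := hw0 b; linarith
      rw [Real.log_div (ne_of_gt hc) (by positivity), Real.log_mul (by norm_num) (ne_of_gt hs)]
      ring
    rw [heq]
    exact (aemeasurable_const.mul hRm).sub hm
  by_cases h0 : ∀ᵐ b, u b = 0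
  · have hcongr : (fun _ => (0:ℝ)) =ᵐ[volume] w := by
      filter_upwards [h0] with b hb
      simp [hw, hb]
    exact aemeasurable_const.congr hcongr
  · have hex1 : ∃ a, 0 < u a ∧ AEMeasurable (fun b => Rx b * Real.log (w a + w b)) volume := by
      by_contra hno
      push_neg at hno
      apply h0
      filter_upwards [H] with a hHa
      by_contra hu
      have ha : 0 < u a := lt_of_le_of_ne (hu0 a) (Ne.symm hu)
      exact hno a ha (key a ha (hHa ha))
    obtain ⟨a₁, ha₁, hg₁⟩ := hex1
    set κ₁ := w a₁ with hκ₁def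
    have hκ₁ : 0 < κ₁ := hwpos a₁ ha₁
    by_cases hsplit : ∀ᵐ a, (0 < u a → w a = κ₁)
    · -- w takes a.e. values in {0, κ₁}
      have hdich : ∀ᵐ b, w b = 0 ∨ w b = κ₁ := by
        filter_upwards [hsplit] with b hb
        by_cases hub : 0 < u b
        · exact Or.inr (hb hub)
        · exact Or.inl (hwz b hub)
      have hmAEM : AEMeasurable
          (fun b => (Rx b * Real.log (κ₁ + w b) - Rx b * Real.log κ₁) / Real.log 2) volume :=
        (hg₁.sub (hRm.mul_const _)).div_const _
      have hcongr : w =ᵐ[volume]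
          (fun b => κ₁ * (((Rx b * Real.log (κ₁ + w b) - Rx b * Real.log κ₁) / Real.log 2) / Rx b)) := by
        filter_upwards [hdich] with b hb
        rcases hb with hb | hb
        · rw [hb]; simp [hb]
        · have hwb : 0 < w b := hb ▸ hκ₁
          have hub : 0 < u b := hwu b hwb
          have hRb : 0 < Rx b := hdom b hub
          rw [hb]
          have : κ₁ + κ₁ = 2 * κ₁ := by ring
          rw [this, Real.log_mul two_ne_zero (ne_of_gt hκ₁)]
          field_simp
          ring
      exact ((aemeasurable_const.mul (hmAEM.div hRm)).congr hcongr.symm).congr (by rfl)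
    · have hex2 : ∃ a, (0 < u a ∧ w a ≠ κ₁) ∧
          AEMeasurable (fun b => Rx b * Real.log (w a + w b)) volume := by
        by_contra hno
        push_neg at hno
        apply hsplit
        filter_upwards [H] with a hHa
        intro hua
        by_contra hne
        exact (hno a ⟨hua, hne⟩) (key a hua (hHa hua))
      obtain ⟨a₂, ⟨ha₂, hne⟩, hg₂⟩ := hex2
      set κ₂ := w a₂ with hκ₂def
      have hκ₂ : 0 < κ₂ := hwpos a₂ ha₂
      set y : β → ℝ := fun b =>
        (Rx b * Real.log (κ₂ + w b) - Rx b * Real.log (κ₁ + w b)) / Rx b with hydef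
      have hym : AEMeasurable y volume := (hg₂.sub hg₁).div hRm
      set v : β → ℝ := fun b => (κ₂ - κ₁ * Real.exp (y b)) / (Real.exp (y b) - 1) with hvdef
      have hvm : AEMeasurable v volume := by
        have he : AEMeasurable (fun b => Real.exp (y b)) volume :=
          Real.measurable_exp.comp_aemeasurable hym
        exact (aemeasurable_const.sub (aemeasurable_const.mul he)).div (he.sub aemeasurable_const)
      have hveq : ∀ b, Rx b ≠ 0 → v b = w b := by
        intro b hRb
        have hRbpos : 0 < Rx b := lt_of_le_of_ne (hR0 b) (Ne.symm hRb)
        have ht : 0 ≤ w b := hw0 b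
        have h1 : 0 < κ₁ + w b := by linarith
        have h2 : 0 < κ₂ + w b := by linarith
        have hy : y b = Real.log (κ₂ + w b) - Real.log (κ₁ + w b) := by
          show (Rx b * Real.log (κ₂ + w b) - Rx b * Real.log (κ₁ + w b)) / Rx b = _
          rw [← mul_sub, mul_div_cancel_left₀ _ hRb]
        have he : Real.exp (y b) = (κ₂ + w b) / (κ₁ + w b) := by
          rw [hy, Real.exp_sub, Real.exp_log h2, Real.exp_log h1]
        show (κ₂ - κ₁ * Real.exp (y b)) / (Real.exp (y b) - 1) = w b
        rw [he]
        have hd : (κ₂ + w b) / (κ₁ + w b) - 1 = (κ₂ - κ₁) / (κ₁ + w b) := by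
          field_simp
          ring
        have hn : κ₂ - κ₁ * ((κ₂ + w b) / (κ₁ + w b)) = w b * (κ₂ - κ₁) / (κ₁ + w b) := by
          field_simp; ring
        rw [hd, hn, div_div_div_cancel_right₀ (ne_of_gt h1),
          mul_div_cancel_right₀ _ (sub_ne_zero.mpr hne)]
      obtain ⟨V, hVm, hV⟩ := hvm
      obtain ⟨R', hR'm, hR'⟩ := hRm
      refine ⟨fun b => if R' b = 0 then 0 else V b, Measurable.ite (hR'm (measurableSet_singleton 0)) measurable_const hVm, ?_⟩
      filter_upwards [hV, hR'] with b hvb hrb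
      by_cases hRb : Rx b = 0
      · have : R' b = 0 := by rw [← hrb]; exact hRb
        rw [if_pos this]
        show u b / Rx b = 0
        rw [hRb, div_zero]
      · have : ¬ R' b = 0 := by rw [← hrb]; exact hRb
        rw [if_neg this, ← hvb, hveq b hRb]

/-- symmetrized integrand on `x × z^{0:J}` -/
noncomputable def PhiI (d m : ℕ) (Qc : (Fin d → ℝ) → (Fin m → ℝ) → ℝ)
    (Qz : (Fin m → ℝ) → ℝ) (R : (Fin d → ℝ) → (Fin m → ℝ) → ℝ)
    (P : (Fin d → ℝ) → ℝ) (J : ℕ) :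
    (Fin d → ℝ) × (Fin (J+1) → (Fin m → ℝ)) → ℝ := fun q =>
  (∏ j, R q.1 (q.2 j)) *
    ((1 / ((J:ℝ) + 1) * ∑ j, Qc q.1 (q.2 j) * Qz (q.2 j) / R q.1 (q.2 j)) *
      Real.log (P q.1 / (1 / ((J:ℝ) + 1) * ∑ j, Qc q.1 (q.2 j) * Qz (q.2 j) / R q.1 (q.2 j))))

lemma alg_helper (u R ρ L : ℝ) (h : u / R * R = u) : (u * ρ) * L = u / R * ((R * ρ) * L) := by
  calc (u * ρ) * L = (u/R*R) * (ρ * L) := by rw [h]; ring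
    _ = u/R * ((R*ρ)*L) := by ring

lemma phi_repr {d m : ℕ} (Qc : (Fin d → ℝ) → (Fin m → ℝ) → ℝ) (Qz : (Fin m → ℝ) → ℝ)
    (R : (Fin d → ℝ) → (Fin m → ℝ) → ℝ) (P : (Fin d → ℝ) → ℝ)
    (hQc_nonneg : ∀ x z, 0 ≤ Qc x z) (hQz_nonneg : ∀ z, 0 ≤ Qz z)
    (hR_nonneg : ∀ x z, 0 ≤ R x z)
    (hR_dom : ∀ x z, 0 < Qc x z * Qz z → 0 < R x z)
    (J : ℕ)
    (hJ : Integrable (fun p : ((Fin d → ℝ) × (Fin m → ℝ)) × (Fin J → (Fin m → ℝ)) =>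
        (Qc p.1.1 p.1.2 * Qz p.1.2 * ∏ j, R p.1.1 (p.2 j)) *
          Real.log (P p.1.1 / ((1 / (J + 1 : ℝ)) *
            (Qc p.1.1 p.1.2 * Qz p.1.2 / R p.1.1 p.1.2 +
              ∑ j, Qc p.1.1 (p.2 j) * Qz (p.2 j) / R p.1.1 (p.2 j))))) volume) :
    Integrable (PhiI d m Qc Qz R P J) volume ∧
      ∫ q, PhiI d m Qc Qz R P J q = IWLB d m Qc Qz R P J := by
  have huw : ∀ x z, (Qc x z * Qz z / R x z) * R x z = Qc x z * Qz z := by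
    intro x z
    rcases eq_or_lt_of_le (hR_nonneg x z) with h | h
    · rcases eq_or_lt_of_le (mul_nonneg (hQc_nonneg x z) (hQz_nonneg z)) with h2 | h2
      · rw [← h, ← h2, mul_zero]
      · exact absurd (hR_dom x z h2) (by rw [← h]; exact lt_irrefl 0)
    · field_simp
  set D := fun p : ((Fin d → ℝ) × (Fin m → ℝ)) × (Fin J → (Fin m → ℝ)) =>
      (Qc p.1.1 p.1.2 * Qz p.1.2 * ∏ j, R p.1.1 (p.2 j)) *
        Real.log (P p.1.1 / ((1 / (J + 1 : ℝ)) *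
          (Qc p.1.1 p.1.2 * Qz p.1.2 / R p.1.1 p.1.2 +
            ∑ j, Qc p.1.1 (p.2 j) * Qz (p.2 j) / R p.1.1 (p.2 j)))) with hD
  have key : ∀ i : Fin (J+1),
      Integrable (fun q : (Fin d → ℝ) × (Fin (J+1) → (Fin m → ℝ)) =>
        (Qc q.1 (q.2 i) * Qz (q.2 i) / R q.1 (q.2 i)) *
          ((∏ j, R q.1 (q.2 j)) *
            Real.log (P q.1 /
              (1 / ((J:ℝ) + 1) * ∑ j, Qc q.1 (q.2 j) * Qz (q.2 j) / R q.1 (q.2 j))))) volume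
      ∧ ∫ q : (Fin d → ℝ) × (Fin (J+1) → (Fin m → ℝ)),
          (Qc q.1 (q.2 i) * Qz (q.2 i) / R q.1 (q.2 i)) *
            ((∏ j, R q.1 (q.2 j)) *
              Real.log (P q.1 /
                (1 / ((J:ℝ) + 1) * ∑ j, Qc q.1 (q.2 j) * Qz (q.2 j) / R q.1 (q.2 j))))
          = IWLB d m Qc Qz R P J := by
    intro i
    set T : ((Fin d → ℝ) × (Fin (J+1) → (Fin m → ℝ))) ≃ᵐ
        (((Fin d → ℝ) × (Fin m → ℝ)) × (Fin J → (Fin m → ℝ))) :=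
      ((MeasurableEquiv.refl (Fin d → ℝ)).prodCongr
        (MeasurableEquiv.piFinSuccAbove (fun _ => (Fin m → ℝ)) i)).trans
        (MeasurableEquiv.prodAssoc).symm with hT
    have hTmp : MeasurePreserving T volume volume := by
      have he1mp : MeasurePreserving
          (⇑(MeasurableEquiv.piFinSuccAbove (fun _ : Fin (J+1) => (Fin m → ℝ)) i))
          (volume : Measure (Fin (J+1) → Fin m → ℝ))
          (((volume : Measure (Fin m → ℝ))).prod (volume : Measure (Fin J → Fin m → ℝ))) :=
        measurePreserving_piFinSuccAbove (fun _ : Fin (J+1) => (volume : Measure (Fin m → ℝ))) i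
      have h1 : MeasurePreserving
          (⇑((MeasurableEquiv.refl (Fin d → ℝ)).prodCongr
            (MeasurableEquiv.piFinSuccAbove (fun _ : Fin (J+1) => (Fin m → ℝ)) i)))
          ((volume : Measure (Fin d → ℝ)).prod (volume : Measure (Fin (J+1) → Fin m → ℝ)))
          ((volume : Measure (Fin d → ℝ)).prod
            (((volume : Measure (Fin m → ℝ))).prod (volume : Measure (Fin J → Fin m → ℝ)))) :=
        (MeasurePreserving.id _).prod he1mp
      have h2 := (measurePreserving_prodAssoc (volume : Measure (Fin d → ℝ))
          (volume : Measure (Fin m → ℝ)) (volume : Measure (Fin J → Fin m → ℝ))).symm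
      exact h2.comp h1
    have hcomp := (hTmp.integrable_comp_emb T.measurableEmbedding).mpr hJ
    have hval := hTmp.integral_comp T.measurableEmbedding D
    have hpt : ∀ q : (Fin d → ℝ) × (Fin (J+1) → (Fin m → ℝ)),
        D (T q) = (Qc q.1 (q.2 i) * Qz (q.2 i) / R q.1 (q.2 i)) *
          ((∏ j, R q.1 (q.2 j)) *
            Real.log (P q.1 /
              (1 / ((J:ℝ) + 1) * ∑ j, Qc q.1 (q.2 j) * Qz (q.2 j) / R q.1 (q.2 j)))) := by
      intro q
      show (Qc q.1 (q.2 i) * Qz (q.2 i) * ∏ j : Fin J, R q.1 (q.2 (i.succAbove j))) *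
          Real.log (P q.1 / ((1 / ((J:ℝ) + 1)) *
            (Qc q.1 (q.2 i) * Qz (q.2 i) / R q.1 (q.2 i) +
              ∑ j : Fin J, Qc q.1 (q.2 (i.succAbove j)) * Qz (q.2 (i.succAbove j)) /
                R q.1 (q.2 (i.succAbove j))))) = _
      have hsum : Qc q.1 (q.2 i) * Qz (q.2 i) / R q.1 (q.2 i) +
          ∑ j : Fin J, Qc q.1 (q.2 (i.succAbove j)) * Qz (q.2 (i.succAbove j)) /
            R q.1 (q.2 (i.succAbove j))
          = ∑ j : Fin (J+1), Qc q.1 (q.2 j) * Qz (q.2 j) / R q.1 (q.2 j) :=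
        (Fin.sum_univ_succAbove (fun j => Qc q.1 (q.2 j) * Qz (q.2 j) / R q.1 (q.2 j)) i).symm
      have hprodR : ∏ j : Fin (J+1), R q.1 (q.2 j)
          = R q.1 (q.2 i) * ∏ j : Fin J, R q.1 (q.2 (i.succAbove j)) :=
        Fin.prod_univ_succAbove (fun j => R q.1 (q.2 j)) i
      rw [hsum, hprodR]
      exact alg_helper _ _ _ _ (huw q.1 (q.2 i))
    constructor
    · exact hcomp.congr (Filter.Eventually.of_forall hpt)
    · rw [← integral_congr_ae (Filter.Eventually.of_forall hpt)]
      exact hval.trans rfl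
  have hptΦ : ∀ q : (Fin d → ℝ) × (Fin (J+1) → (Fin m → ℝ)),
      PhiI d m Qc Qz R P J q
      = 1 / ((J:ℝ)+1) * ∑ i : Fin (J+1), (Qc q.1 (q.2 i) * Qz (q.2 i) / R q.1 (q.2 i)) *
          ((∏ j, R q.1 (q.2 j)) *
            Real.log (P q.1 /
              (1 / ((J:ℝ) + 1) * ∑ j, Qc q.1 (q.2 j) * Qz (q.2 j) / R q.1 (q.2 j)))) := by
    intro q
    show (∏ j, R q.1 (q.2 j)) *
      ((1 / ((J:ℝ) + 1) * ∑ j, Qc q.1 (q.2 j) * Qz (q.2 j) / R q.1 (q.2 j)) *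
        Real.log (P q.1 /
          (1 / ((J:ℝ) + 1) * ∑ j, Qc q.1 (q.2 j) * Qz (q.2 j) / R q.1 (q.2 j)))) = _
    rw [← Finset.sum_mul]
    ring
  constructor
  · exact ((integrable_finset_sum Finset.univ (fun i _ => (key i).1)).const_mul
      (1/((J:ℝ)+1))).congr (Filter.Eventually.of_forall fun q => (hptΦ q).symm)
  · rw [integral_congr_ae (Filter.Eventually.of_forall hptΦ)]
    rw [integral_const_mul, integral_finset_sum Finset.univ (fun i _ => (key i).1),
      Finset.sum_congr rfl (fun i _ => (key i).2), Finset.sum_const, Finset.card_univ,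
      Fintype.card_fin, nsmul_eq_mul]
    push_cast
    rw [← mul_assoc, one_div, inv_mul_cancel₀ (by positivity : ((J:ℝ)+1) ≠ 0), one_mul]

/-- The exact evidence lower bound for the semi-implicit marginal. -/
noncomputable def semiImplicitELBO (d m : ℕ) (Qc : (Fin d → ℝ) → (Fin m → ℝ) → ℝ)
    (Qz : (Fin m → ℝ) → ℝ) (P : (Fin d → ℝ) → ℝ) : ℝ :=
  ∫ x, (∫ z, Qc x z * Qz z) * Real.log (P x / ∫ z, Qc x z * Qz z)

/-- For any reverse model `R`, `IWLB_J ≤ IWLB_{J+1} ≤ ELBO` for all `J ≥ 0`. -/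
theorem iwlb_monotone_le_elbo (d m : ℕ)
    (Qc : (Fin d → ℝ) → (Fin m → ℝ) → ℝ) (Qz : (Fin m → ℝ) → ℝ)
    (R : (Fin d → ℝ) → (Fin m → ℝ) → ℝ) (P : (Fin d → ℝ) → ℝ)
    (hQc_nonneg : ∀ x z, 0 ≤ Qc x z) (hQz_nonneg : ∀ z, 0 ≤ Qz z)
    (hQz_prob : ∫ z, Qz z = 1) (hQc_prob : ∀ z, ∫ x, Qc x z = 1)
    (hR_nonneg : ∀ x z, 0 ≤ R x z) (hR_prob : ∀ x, ∫ z, R x z = 1)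
    (hR_dom : ∀ x z, 0 < Qc x z * Qz z → 0 < R x z)
    (hP_pos : ∀ x, 0 < P x)
    (hint : ∀ J : ℕ,
      Integrable (fun p : ((Fin d → ℝ) × (Fin m → ℝ)) × (Fin J → (Fin m → ℝ)) =>
        (Qc p.1.1 p.1.2 * Qz p.1.2 * ∏ j, R p.1.1 (p.2 j)) *
          Real.log (P p.1.1 / ((1 / (J + 1 : ℝ)) *
            (Qc p.1.1 p.1.2 * Qz p.1.2 / R p.1.1 p.1.2 +
              ∑ j, Qc p.1.1 (p.2 j) * Qz (p.2 j) / R p.1.1 (p.2 j))))))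
    (hint_elbo : Integrable (fun x =>
      (∫ z, Qc x z * Qz z) * Real.log (P x / ∫ z, Qc x z * Qz z))) :
    ∀ J : ℕ, IWLB d m Qc Qz R P J ≤ IWLB d m Qc Qz R P (J + 1)
      ∧ IWLB d m Qc Qz R P J ≤ semiImplicitELBO d m Qc Qz P := by
  have hu_nonneg : ∀ x z, 0 ≤ Qc x z * Qz z :=
    fun x z => mul_nonneg (hQc_nonneg x z) (hQz_nonneg z)
  have hRint : ∀ x, Integrable (R x) volume := by
    intro x
    by_contra h
    have h2 := hR_prob x
    rw [integral_undef h] at h2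
    norm_num at h2
  -- joint integrability of the two-point function, from `hint 1`
  have hW2 : Integrable (fun q : (Fin d → ℝ) × ((Fin m → ℝ) × (Fin m → ℝ)) =>
      (Qc q.1 q.2.1 * Qz q.2.1 * R q.1 q.2.2) *
        Real.log (P q.1 / ((1 / ((1:ℕ) + 1 : ℝ)) *
          (Qc q.1 q.2.1 * Qz q.2.1 / R q.1 q.2.1 + Qc q.1 q.2.2 * Qz q.2.2 / R q.1 q.2.2))))
      ((volume : Measure (Fin d → ℝ)).prod
        ((volume : Measure (Fin m → ℝ)).prod (volume : Measure (Fin m → ℝ)))) := by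
    set T2 : ((Fin d → ℝ) × ((Fin m → ℝ) × (Fin m → ℝ))) ≃ᵐ
        (((Fin d → ℝ) × (Fin m → ℝ)) × (Fin 1 → (Fin m → ℝ))) :=
      ((MeasurableEquiv.refl (Fin d → ℝ)).prodCongr ((MeasurableEquiv.refl (Fin m → ℝ)).prodCongr
        (MeasurableEquiv.funUnique (Fin 1) (Fin m → ℝ)).symm)).trans
        MeasurableEquiv.prodAssoc.symm with hT2
    have hT2mp : MeasurePreserving T2 volume volume := by
      have hfu : MeasurePreserving (⇑(MeasurableEquiv.funUnique (Fin 1) (Fin m → ℝ)).symm)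
          (volume : Measure (Fin m → ℝ)) (volume : Measure (Fin 1 → Fin m → ℝ)) :=
        (volume_preserving_funUnique (Fin 1) (Fin m → ℝ)).symm
      have hinner : MeasurePreserving
          (⇑((MeasurableEquiv.refl (Fin m → ℝ)).prodCongr
            (MeasurableEquiv.funUnique (Fin 1) (Fin m → ℝ)).symm))
          ((volume : Measure (Fin m → ℝ)).prod (volume : Measure (Fin m → ℝ)))
          ((volume : Measure (Fin m → ℝ)).prod (volume : Measure (Fin 1 → Fin m → ℝ))) :=
        (MeasurePreserving.id _).prod hfu
      have houter : MeasurePreserving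
          (⇑((MeasurableEquiv.refl (Fin d → ℝ)).prodCongr
            ((MeasurableEquiv.refl (Fin m → ℝ)).prodCongr
              (MeasurableEquiv.funUnique (Fin 1) (Fin m → ℝ)).symm)))
          ((volume : Measure (Fin d → ℝ)).prod
            ((volume : Measure (Fin m → ℝ)).prod (volume : Measure (Fin m → ℝ))))
          ((volume : Measure (Fin d → ℝ)).prod
            ((volume : Measure (Fin m → ℝ)).prod (volume : Measure (Fin 1 → Fin m → ℝ)))) :=
        (MeasurePreserving.id _).prod hinner
      have hassoc := (measurePreserving_prodAssoc (volume : Measure (Fin d → ℝ))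
        (volume : Measure (Fin m → ℝ)) (volume : Measure (Fin 1 → Fin m → ℝ))).symm
      exact hassoc.comp houter
    have hcomp := (hT2mp.integrable_comp_emb T2.measurableEmbedding).mpr (hint 1)
    refine hcomp.congr (Filter.Eventually.of_forall fun q => ?_)
    show (Qc q.1 q.2.1 * Qz q.2.1 * ∏ j : Fin 1, R q.1 ((fun _ => q.2.2) j)) *
        Real.log (P q.1 / ((1 / ((1:ℕ) + 1 : ℝ)) *
          (Qc q.1 q.2.1 * Qz q.2.1 / R q.1 q.2.1 +
            ∑ j : Fin 1, Qc q.1 ((fun _ => q.2.2) j) * Qz ((fun _ => q.2.2) j) /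
              R q.1 ((fun _ => q.2.2) j)))) = _
    rw [Fin.prod_univ_one, Fin.sum_univ_one]
  -- a.e. slice measurability hypothesis for the extraction lemma
  have hW2ae : ∀ᵐ x : Fin d → ℝ, ∀ᵐ a : Fin m → ℝ, 0 < Qc x a * Qz a →
      AEMeasurable (fun b => R x b * Real.log (P x /
        (2⁻¹ * (Qc x a * Qz a / R x a + Qc x b * Qz b / R x b)))) volume := by
    filter_upwards [hW2.prod_right_ae] with x hx
    filter_upwards [hx.prod_right_ae] with a ha
    intro hua
    have hne : Qc x a * Qz a ≠ 0 := ne_of_gt hua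
    have h1 : AEMeasurable (fun b => (Qc x a * Qz a)⁻¹ *
        ((Qc x a * Qz a * R x b) * Real.log (P x / ((1 / ((1:ℕ) + 1 : ℝ)) *
          (Qc x a * Qz a / R x a + Qc x b * Qz b / R x b))))) volume :=
      ha.aemeasurable.const_mul _
    refine h1.congr (Filter.Eventually.of_forall fun b => ?_)
    have hone : (1 / ((1:ℕ) + 1 : ℝ)) = 2⁻¹ := by norm_num
    rw [hone]
    generalize Real.log (P x /
      (2⁻¹ * (Qc x a * Qz a / R x a + Qc x b * Qz b / R x b))) = L
    beta_reduce
    rw [← mul_assoc, ← mul_assoc, inv_mul_cancel₀ hne, one_mul]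
  have hwm_ae : ∀ᵐ x : Fin d → ℝ,
      AEMeasurable (fun b => Qc x b * Qz b / R x b) volume := by
    filter_upwards [hW2ae] with x hx
    exact ext_w_aem (R x) (fun b => Qc x b * Qz b) (P x) (hP_pos x)
      (hR_nonneg x) (fun b => hu_nonneg x b) (fun b => hR_dom x b)
      (hRint x).aemeasurable hx
  intro J
  obtain ⟨hΦJ_int, hΦJ_val⟩ :=
    phi_repr Qc Qz R P hQc_nonneg hQz_nonneg hR_nonneg hR_dom J (hint J)
  obtain ⟨hΦJ1_int, hΦJ1_val⟩ :=
    phi_repr Qc Qz R P hQc_nonneg hQz_nonneg hR_nonneg hR_dom (J+1) (hint (J+1))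
  have hΦJ_int' : Integrable (PhiI d m Qc Qz R P J)
      ((volume : Measure (Fin d → ℝ)).prod
        (volume : Measure (Fin (J+1) → Fin m → ℝ))) := hΦJ_int
  have hΦJ1_int' : Integrable (PhiI d m Qc Qz R P (J+1))
      ((volume : Measure (Fin d → ℝ)).prod
        (volume : Measure (Fin (J+1+1) → Fin m → ℝ))) := hΦJ1_int
  have hfubJ : ∫ q, PhiI d m Qc Qz R P J q = ∫ x, ∫ z, PhiI d m Qc Qz R P J (x, z) :=
    integral_prod _ hΦJ_int'
  have hfubJ1 : ∫ q, PhiI d m Qc Qz R P (J+1) q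
      = ∫ x, ∫ z, PhiI d m Qc Qz R P (J+1) (x, z) :=
    integral_prod _ hΦJ1_int'
  have houterJ : Integrable (fun x => ∫ z, PhiI d m Qc Qz R P J (x, z)) volume :=
    hΦJ_int'.integral_prod_left
  have houterJ1 : Integrable (fun x => ∫ z, PhiI d m Qc Qz R P (J+1) (x, z)) volume :=
    hΦJ1_int'.integral_prod_left
  have hsliceJ := hΦJ_int'.prod_right_ae
  have hsliceJ1 := hΦJ1_int'.prod_right_ae
  constructor
  · have hmono : ∫ x, (∫ z, PhiI d m Qc Qz R P J (x, z))
        ≤ ∫ x, (∫ z, PhiI d m Qc Qz R P (J+1) (x, z)) := by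
      refine integral_mono_ae houterJ houterJ1 ?_
      filter_upwards [hsliceJ, hsliceJ1] with x h1x h2x
      exact perx_mono (R x) (fun b => Qc x b * Qz b / R x b) (P x) (hP_pos x)
        (hR_nonneg x) (fun b => div_nonneg (hu_nonneg x b) (hR_nonneg x b))
        (hRint x) (hR_prob x) J h1x h2x
    calc IWLB d m Qc Qz R P J = ∫ q, PhiI d m Qc Qz R P J q := hΦJ_val.symm
      _ = ∫ x, ∫ z, PhiI d m Qc Qz R P J (x, z) := hfubJ
      _ ≤ ∫ x, ∫ z, PhiI d m Qc Qz R P (J+1) (x, z) := hmono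
      _ = ∫ q, PhiI d m Qc Qz R P (J+1) q := hfubJ1.symm
      _ = IWLB d m Qc Qz R P (J + 1) := hΦJ1_val
  · have hjen : ∀ᵐ x : Fin d → ℝ, (∫ z, PhiI d m Qc Qz R P J (x, z))
        ≤ (∫ z, Qc x z * Qz z) * Real.log (P x / ∫ z, Qc x z * Qz z) := by
      filter_upwards [hsliceJ, hwm_ae] with x h1x hwx
      exact perx_jensen (R x) (fun b => Qc x b * Qz b) (fun b => Qc x b * Qz b / R x b)
        (P x) (hP_pos x) (hR_nonneg x) (fun b => hu_nonneg x b) (fun b => hR_dom x b)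
        (fun b => rfl) (hRint x) (hR_prob x) hwx J h1x
    calc IWLB d m Qc Qz R P J = ∫ q, PhiI d m Qc Qz R P J q := hΦJ_val.symm
      _ = ∫ x, ∫ z, PhiI d m Qc Qz R P J (x, z) := hfubJ
      _ ≤ ∫ x, (∫ z, Qc x z * Qz z) * Real.log (P x / ∫ z, Qc x z * Qz z) :=
          integral_mono_ae houterJ hint_elbo hjen
      _ = semiImplicitELBO d m Qc Qz P := rfl
end
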